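/- arXiv:2511.10859 — 2 statements merged into one kernel-verified Lean document; each statement's English description precedes it below -/
import Mathlib

section
/- Let f : ℝ^d → ℝ be L-smooth and u uniform on the sphere of radius d^{1/4} in ℝ^d. Define Δ(x;u) = (f(x+λu) − f(x−λu))/(2λ). Then ‖E_u[Δ(x;u) u] − (1/√d) ∇f(x)‖ ≤ (L λ d^{3/4})/2. -/
open MeasureTheory

noncomputable section

/-- `μ` is the uniform distribution on the sphere of radius `r` in `ℝ^n`. -/
def IsUniformSphere {n : ℕ} (μ : Measure (EuclideanSpace ℝ (Fin n))) (r : ℝ) : Prop :=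
  IsProbabilityMeasure μ ∧ (∀ᵐ u ∂μ, ‖u‖ = r) ∧
    ∀ O : EuclideanSpace ℝ (Fin n) ≃ₗᵢ[ℝ] EuclideanSpace ℝ (Fin n), μ.map O = μ

open Set

local notation "⟪" x ", " y "⟫" => @inner ℝ _ _ x y

section Aux

lemma grad_inner' {E : Type*} [NormedAddCommGroup E] [InnerProductSpace ℝ E] [CompleteSpace E]
    (f : E → ℝ) (y v : E) :
    ⟪gradient f y, v⟫ = fderiv ℝ f y v := by
  simp [gradient, InnerProductSpace.toDual_symm_apply]

lemma taylor_bound' {E : Type*} [NormedAddCommGroup E] [InnerProductSpace ℝ E] [CompleteSpace E]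
    (f : E → ℝ) (hf : Differentiable ℝ f) (L : ℝ)
    (hL : ∀ x y, ‖gradient f x - gradient f y‖ ≤ L * ‖x - y‖) (x h : E) :
    |f (x + h) - f x - ⟪gradient f x, h⟫| ≤ L * ‖h‖ ^ 2 / 2 := by
  set g := gradient f x with hg
  set φ : ℝ → ℝ := fun t => f (x + t • h) - f x - t * ⟪g, h⟫ with hφ
  have hγ : ∀ t : ℝ, HasDerivAt (fun t : ℝ => x + t • h) h t := by
    intro t
    simpa using ((hasDerivAt_id t).smul_const h).const_add x
  have hφ' : ∀ t : ℝ, HasDerivAt φ (⟪gradient f (x + t • h) - g, h⟫) t := by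
    intro t
    have h1 : HasDerivAt (fun t : ℝ => f (x + t • h)) (fderiv ℝ f (x + t • h) h) t :=
      (hf _).hasFDerivAt.comp_hasDerivAt t (hγ t)
    have h2 : HasDerivAt φ (fderiv ℝ f (x + t • h) h - ⟪g, h⟫) t := by
      have h3 := (h1.sub_const (f x)).sub ((hasDerivAt_id' t).mul_const ⟪g, h⟫)
      simp only [one_mul] at h3
      exact h3
    have : (⟪gradient f (x + t • h) - g, h⟫ : ℝ) = fderiv ℝ f (x + t • h) h - ⟪g, h⟫ := by
      rw [inner_sub_left, grad_inner' f]
    rwa [this]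
  have key : ∀ t ∈ Icc (0:ℝ) 1, ‖φ t‖ ≤ L * ‖h‖ ^ 2 * t ^ 2 / 2 := by
    refine image_norm_le_of_norm_deriv_right_le_deriv_boundary
      (f := φ) (f' := fun t => ⟪gradient f (x + t • h) - g, h⟫)
      (B := fun t => L * ‖h‖ ^ 2 * t ^ 2 / 2) (B' := fun t => L * ‖h‖ ^ 2 * t)
      (fun t _ => (hφ' t).continuousAt.continuousWithinAt)
      (fun t _ => (hφ' t).hasDerivWithinAt) (by simp [hφ]) (fun t => ?_) ?_
    · have := ((hasDerivAt_pow 2 t).const_mul (L * ‖h‖ ^ 2)).div_const 2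
      exact this.congr_deriv (by rw [show (2:ℕ) - 1 = 1 from rfl]; push_cast; ring)
    · intro t ht
      calc ‖(⟪gradient f (x + t • h) - g, h⟫ : ℝ)‖
          ≤ ‖gradient f (x + t • h) - g‖ * ‖h‖ := norm_inner_le_norm _ _
        _ ≤ (L * ‖(x + t • h) - x‖) * ‖h‖ := by
            gcongr; exact hL _ _
        _ = L * ‖h‖ ^ 2 * t := by
            simp only [add_sub_cancel_left, norm_smul, Real.norm_eq_abs,
              abs_of_nonneg ht.1]
            ring
  have := key 1 (by norm_num)
  simpa [hφ, Real.norm_eq_abs] using this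

variable {d : ℕ} {μ : Measure (EuclideanSpace ℝ (Fin d))}

lemma integrable_of_bdd' [IsProbabilityMeasure μ]
    {E : Type*} [NormedAddCommGroup E] [NormedSpace ℝ E]
    {φ : EuclideanSpace ℝ (Fin d) → E}
    (hφ : Continuous φ) {C : ℝ} (hb : ∀ᵐ u ∂μ, ‖φ u‖ ≤ C) : Integrable φ μ :=
  (integrable_const C).mono' hφ.aestronglyMeasurable hb

lemma integral_comp_isometry'
    (hinv : ∀ O : EuclideanSpace ℝ (Fin d) ≃ₗᵢ[ℝ] EuclideanSpace ℝ (Fin d), μ.map O = μ)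
    (O : EuclideanSpace ℝ (Fin d) ≃ₗᵢ[ℝ] EuclideanSpace ℝ (Fin d))
    {E : Type*} [NormedAddCommGroup E] [NormedSpace ℝ E]
    (h : EuclideanSpace ℝ (Fin d) → E) (hm : Continuous h) :
    ∫ u, h (O u) ∂μ = ∫ u, h u ∂μ := by
  conv_rhs => rw [← hinv O]
  rw [integral_map O.continuous.measurable.aemeasurable hm.aestronglyMeasurable]

lemma offdiag_moment'
    (hinv : ∀ O : EuclideanSpace ℝ (Fin d) ≃ₗᵢ[ℝ] EuclideanSpace ℝ (Fin d), μ.map O = μ)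
    {i j : Fin d} (hij : i ≠ j) : ∫ u, u i * u j ∂μ = 0 := by
  classical
  set O : EuclideanSpace ℝ (Fin d) ≃ₗᵢ[ℝ] EuclideanSpace ℝ (Fin d) :=
    LinearIsometryEquiv.piLpCongrRight 2
      (fun k : Fin d => if k = j then LinearIsometryEquiv.neg ℝ else
        LinearIsometryEquiv.refl ℝ ℝ) with hO
  have hOapp : ∀ (u : EuclideanSpace ℝ (Fin d)) (k : Fin d),
      O u k = if k = j then -u k else u k := by
    intro u k
    by_cases h : k = j
    · subst h
      simp [hO, LinearIsometryEquiv.piLpCongrRight_apply, PiLp.toLp_apply]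
    · simp [hO, LinearIsometryEquiv.piLpCongrRight_apply, h, PiLp.toLp_apply]
  have hcont : Continuous (fun u : EuclideanSpace ℝ (Fin d) => u i * u j) := by
    exact ((EuclideanSpace.proj i).continuous.mul (EuclideanSpace.proj j).continuous)
  have := integral_comp_isometry' hinv O _ hcont
  have heq : (fun u : EuclideanSpace ℝ (Fin d) => O u i * O u j)
      = fun u => -(u i * u j) := by
    funext u
    rw [hOapp, hOapp, if_neg hij, if_pos rfl]
    ring
  rw [heq] at this
  rw [integral_neg] at this
  linarith [this]

lemma diag_moment_eq'
    (hinv : ∀ O : EuclideanSpace ℝ (Fin d) ≃ₗᵢ[ℝ] EuclideanSpace ℝ (Fin d), μ.map O = μ)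
    (i j : Fin d) : ∫ u, u i ^ 2 ∂μ = ∫ u, u j ^ 2 ∂μ := by
  classical
  set O : EuclideanSpace ℝ (Fin d) ≃ₗᵢ[ℝ] EuclideanSpace ℝ (Fin d) :=
    LinearIsometryEquiv.piLpCongrLeft 2 ℝ ℝ (Equiv.swap i j) with hO
  have hOapp : ∀ u : EuclideanSpace ℝ (Fin d), O u i = u j := by
    intro u
    simp only [hO, LinearIsometryEquiv.piLpCongrLeft_apply, Equiv.piCongrLeft',
      Equiv.coe_fn_mk, Equiv.symm_symm_apply, Equiv.symm_swap]
    rw [Equiv.swap_apply_left]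
  have hcont : Continuous (fun u : EuclideanSpace ℝ (Fin d) => u i ^ 2) :=
    (EuclideanSpace.proj i).continuous.pow 2
  have := integral_comp_isometry' hinv O _ hcont
  simp only [hOapp] at this
  exact this.symm

lemma coord_abs_le_norm (u : EuclideanSpace ℝ (Fin d)) (i : Fin d) : |u i| ≤ ‖u‖ := by
  rw [EuclideanSpace.norm_eq, ← Real.sqrt_sq_eq_abs]
  apply Real.sqrt_le_sqrt
  have : u i ^ 2 ≤ ∑ k, u k ^ 2 :=
    Finset.single_le_sum (fun k _ => sq_nonneg (u k)) (Finset.mem_univ i)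
  simpa [Real.norm_eq_abs, sq_abs] using this

lemma diag_moment_val (hd : 1 ≤ d) [IsProbabilityMeasure μ]
    (hr : ∀ᵐ u ∂μ, ‖u‖ = (d : ℝ) ^ ((1 : ℝ) / 4))
    (hinv : ∀ O : EuclideanSpace ℝ (Fin d) ≃ₗᵢ[ℝ] EuclideanSpace ℝ (Fin d), μ.map O = μ)
    (i : Fin d) : ∫ u, u i ^ 2 ∂μ = (Real.sqrt d)⁻¹ := by
  classical
  set r : ℝ := (d : ℝ) ^ ((1 : ℝ) / 4) with hrdef
  have hr2 : r ^ 2 = Real.sqrt d := by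
    rw [hrdef, ← Real.rpow_natCast ((d:ℝ) ^ ((1:ℝ)/4)) 2, ← Real.rpow_mul (Nat.cast_nonneg d),
      Real.sqrt_eq_rpow]
    norm_num
  have Ik : ∀ k : Fin d, Integrable (fun u : EuclideanSpace ℝ (Fin d) => u k ^ 2) μ := by
    intro k
    refine integrable_of_bdd' ((EuclideanSpace.proj k).continuous.pow 2) (C := r ^ 2) ?_
    filter_upwards [hr] with u hu
    rw [Real.norm_eq_abs, abs_of_nonneg (sq_nonneg _), ← hu]
    calc u k ^ 2 = |u k| ^ 2 := (sq_abs _).symm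
      _ ≤ ‖u‖ ^ 2 := by gcongr; exact coord_abs_le_norm u k
  have hsum : ∑ k : Fin d, ∫ u, u k ^ 2 ∂μ = Real.sqrt d := by
    rw [← integral_finset_sum Finset.univ (fun k _ => Ik k)]
    have : ∫ u, (∑ k : Fin d, u k ^ 2) ∂μ = ∫ _u, (Real.sqrt d : ℝ) ∂μ := by
      apply integral_congr_ae
      filter_upwards [hr] with u hu
      have : ∑ k : Fin d, u k ^ 2 = ‖u‖ ^ 2 := by
        rw [EuclideanSpace.norm_eq, Real.sq_sqrt (Finset.sum_nonneg fun k _ => sq_nonneg _)]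
        simp [Real.norm_eq_abs, sq_abs]
      rw [this, hu, hr2]
    rw [this, integral_const]
    simp
  have hall : ∀ k : Fin d, ∫ u, u k ^ 2 ∂μ = ∫ u, u i ^ 2 ∂μ := fun k =>
    diag_moment_eq' hinv k i
  rw [Finset.sum_congr rfl (fun k _ => hall k), Finset.sum_const, Finset.card_univ,
    Fintype.card_fin, nsmul_eq_mul] at hsum
  have hd0 : (0:ℝ) < d := by exact_mod_cast hd
  have hsd : Real.sqrt d ≠ 0 := by positivity
  have hsq : Real.sqrt d * Real.sqrt d = d := Real.mul_self_sqrt (le_of_lt hd0)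
  have hdne : (d:ℝ) ≠ 0 := ne_of_gt hd0
  have hIval : ∫ u, u i ^ 2 ∂μ = Real.sqrt d / d := by
    rw [eq_div_iff hdne, mul_comm]; exact hsum
  have hfin : (Real.sqrt d)⁻¹ = Real.sqrt d / d := by
    rw [inv_eq_one_div, div_eq_div_iff hsd hdne, one_mul, hsq]
  rw [hIval, ← hfin]

lemma second_moment (hd : 1 ≤ d) [IsProbabilityMeasure μ]
    (hr : ∀ᵐ u ∂μ, ‖u‖ = (d : ℝ) ^ ((1 : ℝ) / 4))
    (hinv : ∀ O : EuclideanSpace ℝ (Fin d) ≃ₗᵢ[ℝ] EuclideanSpace ℝ (Fin d), μ.map O = μ)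
    (g : EuclideanSpace ℝ (Fin d)) :
    ∫ u, (⟪g, u⟫ : ℝ) • u ∂μ = (Real.sqrt d)⁻¹ • g := by
  classical
  set r : ℝ := (d : ℝ) ^ ((1 : ℝ) / 4) with hrdef
  have hIinner : Integrable (fun u : EuclideanSpace ℝ (Fin d) => (⟪g, u⟫ : ℝ) • u) μ := by
    refine integrable_of_bdd' ?_ (C := ‖g‖ * r * r) ?_
    · exact (continuous_const.inner (𝕜 := ℝ) continuous_id).smul continuous_id
    · filter_upwards [hr] with u hu
      rw [norm_smul, Real.norm_eq_abs]
      calc |(⟪g, u⟫ : ℝ)| * ‖u‖ ≤ (‖g‖ * ‖u‖) * ‖u‖ :=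
            mul_le_mul_of_nonneg_right (abs_real_inner_le_norm g u) (norm_nonneg u)
        _ = ‖g‖ * r * r := by rw [hu]
  have hIij : ∀ i j : Fin d,
      Integrable (fun u : EuclideanSpace ℝ (Fin d) => u j * u i) μ := by
    intro i j
    refine integrable_of_bdd'
      ((EuclideanSpace.proj j).continuous.mul (EuclideanSpace.proj i).continuous)
      (C := r * r) ?_
    filter_upwards [hr] with u hu
    rw [Real.norm_eq_abs, abs_mul]
    calc |u j| * |u i| ≤ ‖u‖ * ‖u‖ :=
          mul_le_mul (coord_abs_le_norm u j) (coord_abs_le_norm u i) (abs_nonneg _)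
            (norm_nonneg _)
      _ = r * r := by rw [hu]
  ext i
  have hcoord := (EuclideanSpace.proj (𝕜 := ℝ) i).integral_comp_comm hIinner
  have lhs_eq : (∫ u, (⟪g, u⟫ : ℝ) • u ∂μ) i = ∫ u, (⟪g, u⟫ : ℝ) * u i ∂μ := by
    simp only [PiLp.proj_apply, PiLp.smul_apply, smul_eq_mul] at hcoord
    exact hcoord.symm
  rw [lhs_eq]
  have hexp : (fun u : EuclideanSpace ℝ (Fin d) => (⟪g, u⟫ : ℝ) * u i)
      = fun u => ∑ j : Fin d, g j * (u j * u i) := by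
    funext u
    rw [PiLp.inner_apply]
    simp only [RCLike.inner_apply, conj_trivial]
    rw [Finset.sum_mul]
    congr 1; funext j; ring
  rw [hexp, integral_finset_sum Finset.univ (fun j _ => (hIij i j).const_mul (g j))]
  have : ∀ j : Fin d, ∫ u, g j * (u j * u i) ∂μ = g j * ∫ u, u j * u i ∂μ := fun j =>
    integral_const_mul _ _
  rw [Finset.sum_congr rfl fun j _ => this j]
  rw [Finset.sum_eq_single i]
  · have : ∫ u, u i * u i ∂μ = (Real.sqrt d)⁻¹ := by
      have h2 : (fun u : EuclideanSpace ℝ (Fin d) => u i * u i) = fun u => u i ^ 2 := by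
        funext u; ring
      rw [h2]; exact diag_moment_val hd hr hinv i
    rw [this]
    simp [mul_comm]
  · intro j _ hji
    rw [offdiag_moment' hinv hji, mul_zero]
  · intro h; exact absurd (Finset.mem_univ i) h

end Aux

/-- For an `L`-smooth `f` and `u` uniform on the sphere of radius `d^{1/4}`, with
`Δ(x;u) = (f(x+λu) − f(x−λu))/(2λ)`, we have
`‖E[Δ(x;u) u] − (1/√d) ∇f(x)‖ ≤ L λ d^{3/4} / 2`. -/
theorem two_point_estimator_bias_radius_d_quarter (d : ℕ) (hd : 1 ≤ d) (L lam : ℝ)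
    (hlam : 0 < lam)
    (f : EuclideanSpace ℝ (Fin d) → ℝ) (hf : Differentiable ℝ f)
    (hL : ∀ x y, ‖gradient f x - gradient f y‖ ≤ L * ‖x - y‖)
    (μ : Measure (EuclideanSpace ℝ (Fin d)))
    (hμ : IsUniformSphere μ ((d : ℝ) ^ ((1 : ℝ) / 4)))
    (x : EuclideanSpace ℝ (Fin d)) :
    ‖(∫ u, ((f (x + lam • u) - f (x - lam • u)) / (2 * lam)) • u ∂μ)
        - (Real.sqrt d)⁻¹ • gradient f x‖
      ≤ L * lam * (d : ℝ) ^ ((3 : ℝ) / 4) / 2 := by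
  obtain ⟨hprob, hr, hinv⟩ := hμ
  haveI := hprob
  set r : ℝ := (d : ℝ) ^ ((1 : ℝ) / 4) with hrdef
  have hd0 : (0:ℝ) < d := by exact_mod_cast hd
  have hrpos : 0 < r := Real.rpow_pos_of_pos hd0 _
  have hr3 : r ^ 3 = (d : ℝ) ^ ((3 : ℝ) / 4) := by
    rw [hrdef, ← Real.rpow_natCast ((d:ℝ) ^ ((1:ℝ)/4)) 3, ← Real.rpow_mul (Nat.cast_nonneg d)]
    norm_num
  set g := gradient f x with hg
  -- L is nonnegative
  have hL0 : 0 ≤ L := by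
    set e : EuclideanSpace ℝ (Fin d) := EuclideanSpace.single ⟨0, hd⟩ (1:ℝ) with he
    have h1 : ‖e - 0‖ = 1 := by
      simp [he, EuclideanSpace.norm_single]
    have := (norm_nonneg (gradient f e - gradient f 0)).trans (hL e 0)
    rwa [h1, mul_one] at this
  set Δ : EuclideanSpace ℝ (Fin d) → ℝ :=
    fun u => (f (x + lam • u) - f (x - lam • u)) / (2 * lam) with hΔ
  have hkey : ∀ u, |Δ u - ⟪g, u⟫| ≤ L * lam * ‖u‖ ^ 2 / 2 := by
    intro u
    have hA := taylor_bound' f hf L hL x (lam • u)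
    have hB := taylor_bound' f hf L hL x (-(lam • u))
    rw [← sub_eq_add_neg, inner_neg_right, norm_neg] at hB
    rw [real_inner_smul_right] at hA hB
    rw [norm_smul, Real.norm_eq_abs, abs_of_pos hlam, mul_pow] at hA hB
    have hlam' : (2 : ℝ) * lam ≠ 0 := by positivity
    have hexpand : Δ u - ⟪g, u⟫ =
        ((f (x + lam • u) - f x - lam * ⟪g, u⟫)
          - (f (x - lam • u) - f x - -(lam * ⟪g, u⟫))) / (2 * lam) := by
      rw [hΔ]
      field_simp
      ring
    rw [hexpand, abs_div, abs_of_pos (by positivity : (0:ℝ) < 2 * lam),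
      div_le_iff₀ (by positivity : (0:ℝ) < 2 * lam)]
    have habs : |(f (x + lam • u) - f x - lam * ⟪g, u⟫)
        - (f (x - lam • u) - f x - -(lam * ⟪g, u⟫))|
        ≤ L * (lam ^ 2 * ‖u‖ ^ 2) / 2 + L * (lam ^ 2 * ‖u‖ ^ 2) / 2 :=
      (abs_sub _ _).trans (add_le_add hA hB)
    nlinarith [habs]
  -- integrability
  have hΔcont : Continuous Δ := by
    have : Continuous fun u : EuclideanSpace ℝ (Fin d) => x + lam • u :=
      continuous_const.add (continuous_id.const_smul lam)
    have h2 : Continuous fun u : EuclideanSpace ℝ (Fin d) => x - lam • u :=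
      continuous_const.sub (continuous_id.const_smul lam)
    exact ((hf.continuous.comp this).sub (hf.continuous.comp h2)).div_const _
  have hIΔ : Integrable (fun u => Δ u • u) μ := by
    refine integrable_of_bdd' (hΔcont.smul continuous_id)
      (C := (‖g‖ * r + L * lam * r ^ 2 / 2) * r) ?_
    filter_upwards [hr] with u hu
    rw [norm_smul, Real.norm_eq_abs]
    have h1 : |Δ u| ≤ |⟪g, u⟫| + L * lam * ‖u‖ ^ 2 / 2 := by
      have := hkey u
      have habs := abs_sub_abs_le_abs_sub (Δ u) (⟪g, u⟫ : ℝ)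
      linarith
    have h2 : |(⟪g, u⟫ : ℝ)| ≤ ‖g‖ * ‖u‖ := abs_real_inner_le_norm g u
    rw [← hu]
    have hnn : (0:ℝ) ≤ ‖u‖ := norm_nonneg u
    nlinarith [hkey u]
  have hIinner : Integrable (fun u : EuclideanSpace ℝ (Fin d) => (⟪g, u⟫ : ℝ) • u) μ := by
    refine integrable_of_bdd' ((continuous_const.inner (𝕜 := ℝ) continuous_id).smul continuous_id)
      (C := ‖g‖ * r * r) ?_
    filter_upwards [hr] with u hu
    rw [norm_smul, Real.norm_eq_abs]
    calc |(⟪g, u⟫ : ℝ)| * ‖u‖ ≤ (‖g‖ * ‖u‖) * ‖u‖ :=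
          mul_le_mul_of_nonneg_right (abs_real_inner_le_norm g u) (norm_nonneg u)
      _ = ‖g‖ * r * r := by rw [hu]
  have hmoment := second_moment hd hr hinv g
  rw [← hmoment, ← integral_sub hIΔ hIinner]
  have hle : ‖∫ u, (Δ u • u - (⟪g, u⟫ : ℝ) • u) ∂μ‖
      ≤ ∫ _u, (L * lam * r ^ 3 / 2 : ℝ) ∂μ := by
    refine norm_integral_le_of_norm_le (integrable_const _) ?_
    filter_upwards [hr] with u hu
    rw [← sub_smul, norm_smul, Real.norm_eq_abs]
    calc |Δ u - ⟪g, u⟫| * ‖u‖ ≤ (L * lam * ‖u‖ ^ 2 / 2) * ‖u‖ :=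
          mul_le_mul_of_nonneg_right (hkey u) (norm_nonneg u)
      _ = L * lam * r ^ 3 / 2 := by rw [hu]; ring
  rw [integral_const] at hle
  simp only [measure_univ, ENNReal.toReal_one, probReal_univ, one_smul, smul_eq_mul] at hle
  calc ‖∫ u, (Δ u • u - (⟪g, u⟫ : ℝ) • u) ∂μ‖ ≤ L * lam * r ^ 3 / 2 := by
        simpa using hle
    _ = L * lam * (d : ℝ) ^ ((3 : ℝ) / 4) / 2 := by rw [hr3]
end
end

section
/- Let f : ℝ^d → ℝ be L-smooth, G ∈ ℝ^{d×k} with orthonormal columns, λ > 0, and u uniform on √k · S^{k-1}. Then ‖E_u[((f(x+λGu) − f(x−λGu))/(2λ)) Gu] − GGᵀ∇f(x)‖ ≤ (L λ k^{3/2})/2. -/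
open MeasureTheory

noncomputable section

lemma quad_bound {E : Type*} [NormedAddCommGroup E] [InnerProductSpace ℝ E] [CompleteSpace E]
    (f : E → ℝ) (hf : Differentiable ℝ f) (L : ℝ)
    (hL : ∀ x y, ‖gradient f x - gradient f y‖ ≤ L * ‖x - y‖)
    (x h : E) :
    |f (x + h) - f x - inner ℝ (gradient f x) h| ≤ L * ‖h‖ ^ 2 / 2 := by
  have hcont : Continuous (gradient f) := by
    have : LipschitzWith (Real.toNNReal L) (gradient f) := by
      apply LipschitzWith.of_dist_le_mul
      intro a b
      simp only [dist_eq_norm]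
      refine (hL a b).trans ?_
      gcongr
      exact Real.le_coe_toNNReal L
    exact this.continuous
  have key : ∀ t : ℝ, HasDerivAt (fun t : ℝ => f (x + t • h))
      (inner ℝ (gradient f (x + t • h)) h : ℝ) t := by
    intro t
    have hc : HasDerivAt (fun t : ℝ => x + t • h) h t := by
      simpa using ((hasDerivAt_id t).smul_const h).const_add x
    have := ((hf (x + t • h)).hasGradientAt.hasFDerivAt).comp_hasDerivAt t hc
    simpa [Function.comp_def] using this
  have hgcont : Continuous (fun t : ℝ => (inner ℝ (gradient f (x + t • h)) h : ℝ)) := by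
    exact ((hcont.comp (by continuity)).inner continuous_const)
  have ftc : f (x + h) - f x = ∫ t in (0:ℝ)..1, (inner ℝ (gradient f (x + t • h)) h : ℝ) := by
    have := intervalIntegral.integral_eq_sub_of_hasDerivAt
      (f := fun t : ℝ => f (x + t • h)) (a := 0) (b := 1)
      (fun t _ => key t) ((hgcont.intervalIntegrable 0 1))
    rw [this]
    norm_num
  have const_int : (inner ℝ (gradient f x) h : ℝ)
      = ∫ t in (0:ℝ)..1, (inner ℝ (gradient f x) h : ℝ) := by simp
  rw [ftc, const_int, ← intervalIntegral.integral_sub (hgcont.intervalIntegrable 0 1)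
    (intervalIntegrable_const)]
  have hb : ∀ t ∈ Set.Icc (0:ℝ) 1,
      ‖(inner ℝ (gradient f (x + t • h)) h : ℝ) - inner ℝ (gradient f x) h‖ ≤ L * ‖h‖^2 * t := by
    intro t ht
    rw [← inner_sub_left]
    refine (norm_inner_le_norm _ _).trans ?_
    have h1 : ‖gradient f (x + t • h) - gradient f x‖ ≤ L * (t * ‖h‖) := by
      have := hL (x + t • h) x
      simpa [norm_smul, abs_of_nonneg ht.1] using this
    calc ‖gradient f (x + t • h) - gradient f x‖ * ‖h‖ ≤ L * (t * ‖h‖) * ‖h‖ := by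
          gcongr
      _ = L * ‖h‖^2 * t := by ring
  have key2 := intervalIntegral.norm_integral_le_of_norm_le (μ := volume)
    (g := fun t => L * ‖h‖^2 * t) (a := 0) (b := 1)
    (by norm_num) (Filter.Eventually.of_forall fun t ht => hb t ⟨le_of_lt ht.1, ht.2⟩)
    (by apply Continuous.intervalIntegrable; continuity)
  rw [Real.norm_eq_abs] at key2
  refine key2.trans ?_
  rw [intervalIntegral.integral_const_mul, integral_id]
  have hLh : 0 ≤ L * ‖h‖^2 := by
    rcases eq_or_ne h 0 with rfl | hh
    · simp
    · have := hb 1 (by norm_num)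
      have hn : 0 < ‖h‖^2 := by have := norm_pos_iff.mpr hh; positivity
      nlinarith [norm_nonneg ((inner ℝ (gradient f (x + (1:ℝ) • h)) h : ℝ) - inner ℝ (gradient f x) h)]
  nlinarith

variable {k : ℕ} {μ : Measure (EuclideanSpace ℝ (Fin k))} {r : ℝ}

lemma coord_cont (i : Fin k) : Continuous (fun u : EuclideanSpace ℝ (Fin k) => u i) :=
  (EuclideanSpace.proj (𝕜 := ℝ) i).continuous

lemma integrable_of_bound (hμ : IsUniformSphere μ r) {α : Type*} [NormedAddCommGroup α]
    (g : EuclideanSpace ℝ (Fin k) → α) (hg : Continuous g)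
    (C : ℝ) (hC : ∀ u : EuclideanSpace ℝ (Fin k), ‖u‖ = r → ‖g u‖ ≤ C) : Integrable g μ := by
  obtain ⟨hp, hr, _⟩ := hμ
  refine Integrable.mono' (integrable_const C) hg.aestronglyMeasurable ?_
  filter_upwards [hr] with u hu
  exact hC u hu

-- invariance of integrals
lemma integral_comp_iso (hμ : IsUniformSphere μ r)
    (O : EuclideanSpace ℝ (Fin k) ≃ₗᵢ[ℝ] EuclideanSpace ℝ (Fin k))
    (g : EuclideanSpace ℝ (Fin k) → ℝ) (hg : Continuous g) :
    ∫ u, g u ∂μ = ∫ u, g (O u) ∂μ := by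
  obtain ⟨hp, hr, hinv⟩ := hμ
  conv_lhs => rw [← hinv O]
  rw [integral_map (O.continuous.measurable.aemeasurable) hg.aestronglyMeasurable]

lemma moment_off (hμ : IsUniformSphere μ r) (i j : Fin k) (hij : i ≠ j) :
    ∫ u, u i * u j ∂μ = 0 := by
  classical
  set O := LinearIsometryEquiv.piLpCongrRight 2
    (fun l : Fin k => if l = i then LinearIsometryEquiv.neg ℝ (E := ℝ) else
      LinearIsometryEquiv.refl ℝ ℝ) with hO
  have hOapp : ∀ (v : EuclideanSpace ℝ (Fin k)) (l : Fin k),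
      O v l = if l = i then -(v l) else v l := by
    intro v l
    rw [hO, LinearIsometryEquiv.piLpCongrRight_apply]
    by_cases hl : l = i
    · subst hl; simp
    · simp [hl]
  have hgc : Continuous (fun u : EuclideanSpace ℝ (Fin k) => u i * u j) :=
    (coord_cont i).mul (coord_cont j)
  have h1 := integral_comp_iso hμ O _ hgc
  have h2 : ∀ u : EuclideanSpace ℝ (Fin k), O u i * O u j = -(u i * u j) := by
    intro u
    rw [hOapp, hOapp]
    simp [hij.symm]
  simp only [h2] at h1
  rw [integral_neg] at h1
  linarith

lemma moment_diag (hμ : IsUniformSphere μ (Real.sqrt k)) (hk : 0 < k) (i : Fin k) :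
    ∫ u, u i * u i ∂μ = 1 := by
  classical
  obtain ⟨hp, hr, hinv⟩ := hμ
  -- all diagonal moments equal
  have heq : ∀ j : Fin k, ∫ u, u j * u j ∂μ = ∫ u, u i * u i ∂μ := by
    intro j
    set O := LinearIsometryEquiv.piLpCongrLeft 2 ℝ ℝ (Equiv.swap i j) with hO
    have hOapp : ∀ (v : EuclideanSpace ℝ (Fin k)) (l : Fin k),
        O v l = v (Equiv.swap i j l) := by
      intro v l
      rw [hO, LinearIsometryEquiv.piLpCongrLeft_apply]
      simp [Equiv.piCongrLeft', Equiv.symm_swap]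
    have := integral_comp_iso ⟨hp, hr, hinv⟩ O
      (fun u => u i * u i) ((coord_cont i).mul (coord_cont i))
    rw [this]
    refine integral_congr_ae (Filter.Eventually.of_forall fun u => ?_)
    simp only [hOapp]
    rw [Equiv.swap_apply_left]
  -- sum of diagonal moments is k
  have hint : ∀ j : Fin k, Integrable (fun u : EuclideanSpace ℝ (Fin k) => u j * u j) μ := by
    intro j
    refine integrable_of_bound ⟨hp, hr, hinv⟩ _ ((coord_cont j).mul (coord_cont j))
      (Real.sqrt k * Real.sqrt k) ?_
    intro u hu
    have h1 : |u j| ≤ ‖u‖ := by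
      have := norm_inner_le_norm (𝕜 := ℝ) (EuclideanSpace.single j (1:ℝ)) u
      simpa [EuclideanSpace.inner_single_left] using this
    rw [Real.norm_eq_abs, abs_mul]
    exact mul_le_mul (hu ▸ h1) (hu ▸ h1) (abs_nonneg _) (by positivity)
  have hsum : ∫ u, (∑ j : Fin k, u j * u j) ∂μ = k := by
    have hae : ∀ᵐ u ∂μ, (∑ j : Fin k, u j * u j) = (k : ℝ) := by
      filter_upwards [hr] with u hu
      have : ‖u‖^2 = ∑ j, u j ^2 := by
        rw [EuclideanSpace.norm_eq]
        rw [Real.sq_sqrt (by positivity)]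
        congr 1; ext j; rw [Real.norm_eq_abs, sq_abs]
      calc (∑ j : Fin k, u j * u j) = ∑ j, u j ^ 2 := by congr 1; ext j; ring
        _ = ‖u‖^2 := this.symm
        _ = (k:ℝ) := by rw [hu, Real.sq_sqrt (by positivity)]
    rw [integral_congr_ae hae]
    simp
  rw [integral_finset_sum _ (fun j _ => hint j)] at hsum
  simp only [heq] at hsum
  rw [Finset.sum_const, Finset.card_univ, Fintype.card_fin, nsmul_eq_mul] at hsum
  have hk' : (k:ℝ) ≠ 0 := Nat.cast_ne_zero.mpr hk.ne'
  field_simp at hsum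
  simpa [sq] using hsum

set_option maxHeartbeats 1000000 in
lemma main_aux (d k : ℕ) (L lam : ℝ) (hlam : 0 < lam)
    (f : EuclideanSpace ℝ (Fin d) → ℝ) (hf : Differentiable ℝ f)
    (hL : ∀ x y, ‖gradient f x - gradient f y‖ ≤ L * ‖x - y‖)
    (G : Fin k → EuclideanSpace ℝ (Fin d)) (hG : Orthonormal ℝ G)
    (μ : Measure (EuclideanSpace ℝ (Fin k)))
    (hμ' : IsUniformSphere μ (Real.sqrt k)) (hk : 0 < k)
    (S : EuclideanSpace ℝ (Fin k) → EuclideanSpace ℝ (Fin d))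
    (hSdef : ∀ u, S u = ∑ i, u i • G i)
    (x : EuclideanSpace ℝ (Fin d)) :
    ‖(∫ u, ((f (x + lam • S u) - f (x - lam • S u)) / (2 * lam)) • S u ∂μ)
        - ∑ i, (inner ℝ (G i) (gradient f x) : ℝ) • G i‖
      ≤ L * lam * (k : ℝ) ^ ((3 : ℝ) / 2) / 2 := by
  classical
  obtain ⟨hp, hr, hinv⟩ := hμ'
  haveI := hp
  have hμ' : IsUniformSphere μ (Real.sqrt k) := ⟨hp, hr, hinv⟩
  have hkR : (0:ℝ) < (k:ℝ) := by exact_mod_cast hk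
  obtain ⟨g, hg⟩ : ∃ g, gradient f x = g := ⟨_, rfl⟩
  rw [hg]
  -- basic facts on S
  have hScont : Continuous S := by
    have : Continuous (fun u : EuclideanSpace ℝ (Fin k) => ∑ i, u i • G i) := by
      apply continuous_finset_sum
      exact fun i _ => (coord_cont i).smul continuous_const
    exact this.congr (fun u => (hSdef u).symm)
  have hSnorm : ∀ u, ‖S u‖ = ‖u‖ := by
    intro u
    rw [hSdef u]
    have h2 : (inner ℝ (∑ i, u i • G i) (∑ i, u i • G i) : ℝ) = ∑ i, u i * u i := by
      simpa using hG.inner_sum u u Finset.univ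
    have h4 : (inner ℝ u u : ℝ) = ∑ i, u i * u i := by
      rw [PiLp.inner_apply]
      simp [RCLike.inner_apply, pow_two]
    have h3 : ‖∑ i, u i • G i‖^2 = ‖u‖^2 := by
      rw [← real_inner_self_eq_norm_sq, ← real_inner_self_eq_norm_sq, h2, h4]
    have := congrArg Real.sqrt h3
    rwa [Real.sqrt_sq (norm_nonneg _), Real.sqrt_sq (norm_nonneg _)] at this
  have hSr : ∀ u : EuclideanSpace ℝ (Fin k), ‖u‖ = Real.sqrt k → ‖S u‖ = Real.sqrt k := by
    intro u hu; rw [hSnorm u, hu]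
  have hgradcont : Continuous (fun u => (inner ℝ g (S u) : ℝ)) :=
    continuous_const.inner hScont
  -- L ≥ 0
  have hL0 : 0 ≤ L := by
    have h1 := hL x (x + G ⟨0, hk⟩)
    have h2 : ‖x - (x + G ⟨0, hk⟩)‖ = 1 := by
      simp [hG.1 ⟨0, hk⟩]
    rw [h2, mul_one] at h1
    exact le_trans (norm_nonneg _) h1
  -- pointwise scalar bound
  have hq : ∀ u : EuclideanSpace ℝ (Fin k), ‖u‖ = Real.sqrt k →
      |(f (x + lam • S u) - f (x - lam • S u)) / (2 * lam) - (inner ℝ g (S u) : ℝ)|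
        ≤ L * lam * k / 2 := by
    intro u hu
    have hnorm : ‖lam • S u‖ ^ 2 = lam ^ 2 * k := by
      rw [norm_smul, hSr u hu]
      rw [mul_pow, Real.sq_sqrt (le_of_lt hkR), Real.norm_eq_abs, sq_abs]
    have hA := quad_bound f hf L hL x (lam • S u)
    have hB := quad_bound f hf L hL x (-(lam • S u))
    rw [hg, real_inner_smul_right, hnorm] at hA
    rw [hg, ← sub_eq_add_neg, inner_neg_right, real_inner_smul_right, norm_neg, hnorm] at hB
    have hcform : (f (x + lam • S u) - f (x - lam • S u)) / (2 * lam) - (inner ℝ g (S u) : ℝ)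
        = (f (x + lam • S u) - f (x - lam • S u) - 2 * lam * (inner ℝ g (S u) : ℝ)) / (2 * lam) := by
      field_simp
    rw [hcform, abs_div, abs_of_pos (by positivity : (0:ℝ) < 2 * lam),
      div_le_iff₀ (by positivity)]
    have hA' := abs_le.mp hA
    have hB' := abs_le.mp hB
    rw [abs_le]
    constructor <;> nlinarith [hA'.1, hA'.2, hB'.1, hB'.2]
  -- φ and ψ
  obtain ⟨φ, hφu⟩ : ∃ φ : EuclideanSpace ℝ (Fin k) → EuclideanSpace ℝ (Fin d),
      ∀ u, φ u = ((f (x + lam • S u) - f (x - lam • S u)) / (2 * lam)) • S u :=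
    ⟨_, fun u => rfl⟩
  obtain ⟨ψ, hψu⟩ : ∃ ψ : EuclideanSpace ℝ (Fin k) → EuclideanSpace ℝ (Fin d),
      ∀ u, ψ u = (inner ℝ g (S u) : ℝ) • S u := ⟨_, fun u => rfl⟩
  rw [integral_congr_ae (Filter.Eventually.of_forall fun u => (hφu u).symm)]
  have hφcont : Continuous φ := by
    have : Continuous fun u => ((f (x + lam • S u) - f (x - lam • S u)) / (2 * lam)) • S u := by
      apply Continuous.smul (f := fun u => (f (x + lam • S u) - f (x - lam • S u)) / (2 * lam)) _ hScont
      apply Continuous.div_const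
      exact (hf.continuous.comp (continuous_const.add (hScont.const_smul lam))).sub
        (hf.continuous.comp (continuous_const.sub (hScont.const_smul lam)))
    exact this.congr fun u => (hφu u).symm
  have hψcont : Continuous ψ :=
    (hgradcont.smul hScont).congr fun u => (hψu u).symm
  have hψbound : ∀ u : EuclideanSpace ℝ (Fin k), ‖u‖ = Real.sqrt k →
      ‖ψ u‖ ≤ ‖g‖ * Real.sqrt k * Real.sqrt k := by
    intro u hu
    rw [hψu u, norm_smul, Real.norm_eq_abs, hSr u hu]
    have := abs_real_inner_le_norm g (S u)
    rw [hSr u hu] at this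
    have h0 : (0:ℝ) ≤ Real.sqrt k := Real.sqrt_nonneg _
    calc |(inner ℝ g (S u) : ℝ)| * Real.sqrt k ≤ (‖g‖ * Real.sqrt k) * Real.sqrt k := by gcongr
      _ = ‖g‖ * Real.sqrt k * Real.sqrt k := by ring
  have hdiff : ∀ u : EuclideanSpace ℝ (Fin k), ‖u‖ = Real.sqrt k →
      ‖φ u - ψ u‖ ≤ L * lam * k / 2 * Real.sqrt k := by
    intro u hu
    have heq2 : φ u - ψ u = ((f (x + lam • S u) - f (x - lam • S u)) / (2 * lam)
        - (inner ℝ g (S u) : ℝ)) • S u := by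
      rw [hφu u, hψu u, sub_smul]
    rw [heq2, norm_smul, Real.norm_eq_abs, hSr u hu]
    have h1 := hq u hu
    have h2 : (0:ℝ) ≤ L * lam * k / 2 := by positivity
    gcongr
  have hψint : Integrable ψ μ :=
    integrable_of_bound hμ' ψ hψcont (‖g‖ * Real.sqrt k * Real.sqrt k) hψbound
  have hdiffint : Integrable (fun u => φ u - ψ u) μ := by
    exact integrable_of_bound hμ' _ (hφcont.sub hψcont) (L * lam * k / 2 * Real.sqrt k) hdiff
  have hφint : Integrable φ μ := by
    have h := hdiffint.add hψint
    exact h.congr (Filter.Eventually.of_forall fun u => by simp)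
  -- integral of ψ
  have hinner_expand : ∀ u : EuclideanSpace ℝ (Fin k),
      (inner ℝ g (S u) : ℝ) = ∑ i, u i * (inner ℝ (G i) g : ℝ) := by
    intro u
    rw [hSdef u, inner_sum]
    congr 1; ext i
    rw [real_inner_smul_right, real_inner_comm]
  have hmom : ∀ i j : Fin k, ∫ u, u i * u j ∂μ = if i = j then 1 else 0 := by
    intro i j
    rcases eq_or_ne i j with rfl | hij
    · rw [if_pos rfl]; exact moment_diag hμ' hk i
    · rw [if_neg hij]; exact moment_off hμ' i j hij
  have hintuij : ∀ i j : Fin k, Integrable (fun u : EuclideanSpace ℝ (Fin k) => u i * u j) μ := by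
    intro i j
    refine integrable_of_bound hμ' _ ((coord_cont i).mul (coord_cont j))
      (Real.sqrt k * Real.sqrt k) ?_
    intro u hu
    have h1 : ∀ l : Fin k, |u l| ≤ Real.sqrt k := by
      intro l
      have := norm_inner_le_norm (𝕜 := ℝ) (EuclideanSpace.single l (1:ℝ)) u
      rw [hu] at this
      simpa [EuclideanSpace.inner_single_left] using this
    rw [Real.norm_eq_abs, abs_mul]
    exact mul_le_mul (h1 i) (h1 j) (abs_nonneg _) (Real.sqrt_nonneg _)
  have hψval : ∫ u, ψ u ∂μ = ∑ i, (inner ℝ (G i) g : ℝ) • G i := by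
    have h1 : ∀ u, ψ u = ∑ j, ((inner ℝ g (S u) : ℝ) * u j) • G j := by
      intro u
      calc ψ u = (inner ℝ g (S u) : ℝ) • S u := hψu u
        _ = (inner ℝ g (S u) : ℝ) • ∑ j, u j • G j :=
            congrArg (fun v => (inner ℝ g (S u) : ℝ) • v) (hSdef u)
        _ = ∑ j, (inner ℝ g (S u) : ℝ) • (u j • G j) := Finset.smul_sum
        _ = ∑ j, ((inner ℝ g (S u) : ℝ) * u j) • G j :=
            Finset.sum_congr rfl fun j _ => smul_smul _ _ _
    rw [integral_congr_ae (Filter.Eventually.of_forall h1)]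
    have hintj : ∀ j : Fin k, Integrable
        (fun u : EuclideanSpace ℝ (Fin k) => ((inner ℝ g (S u) : ℝ) * u j) • G j) μ := by
      intro j
      refine integrable_of_bound hμ' _ ?_ ((‖g‖ * Real.sqrt k * Real.sqrt k) * ‖G j‖) ?_
      · exact (hgradcont.mul (coord_cont j)).smul continuous_const
      · intro u hu
        rw [norm_smul, Real.norm_eq_abs, abs_mul]
        have h1 : |(inner ℝ g (S u) : ℝ)| ≤ ‖g‖ * Real.sqrt k := by
          have := abs_real_inner_le_norm g (S u)
          rwa [hSr u hu] at this
        have h2 : |u j| ≤ Real.sqrt k := by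
          have := norm_inner_le_norm (𝕜 := ℝ) (EuclideanSpace.single j (1:ℝ)) u
          rw [hu] at this
          simpa [EuclideanSpace.inner_single_left] using this
        have h3 : (0:ℝ) ≤ ‖g‖ * Real.sqrt k := by positivity
        exact mul_le_mul_of_nonneg_right (mul_le_mul h1 h2 (abs_nonneg _) h3) (norm_nonneg _)
    rw [integral_finset_sum _ (fun j _ => hintj j)]
    congr 1; funext j
    rw [integral_smul_const]
    congr 1
    have h2 : ∀ u : EuclideanSpace ℝ (Fin k),
        (inner ℝ g (S u) : ℝ) * u j = ∑ i, (inner ℝ (G i) g : ℝ) * (u i * u j) := by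
      intro u
      rw [hinner_expand u, Finset.sum_mul]
      exact Finset.sum_congr rfl fun i _ => by ring
    rw [integral_congr_ae (Filter.Eventually.of_forall h2)]
    rw [integral_finset_sum _ (fun i _ => (hintuij i j).const_mul _)]
    have h3 : ∀ i : Fin k, (∫ u, (inner ℝ (G i) g : ℝ) * (u i * u j) ∂μ)
        = if i = j then (inner ℝ (G j) g : ℝ) else 0 := by
      intro i
      rw [integral_const_mul, hmom i j]
      rcases eq_or_ne i j with rfl | hij
      · simp
      · simp [hij]
    simp only [h3]
    simp
  -- final assembly
  have hsplit : (∫ u, φ u ∂μ) - ∑ i, (inner ℝ (G i) g : ℝ) • G i = ∫ u, (φ u - ψ u) ∂μ := by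
    rw [integral_sub hφint hψint, hψval]
  have hbound : ‖∫ u, (φ u - ψ u) ∂μ‖ ≤ L * lam * k / 2 * Real.sqrt k := by
    have h1 := norm_integral_le_of_norm_le (μ := μ)
      (integrable_const (L * lam * k / 2 * Real.sqrt k))
      (by filter_upwards [hr] with u hu; exact hdiff u hu)
    have h2 : ∫ (_ : EuclideanSpace ℝ (Fin k)), (L * lam * ↑k / 2 * Real.sqrt k) ∂μ
        = L * lam * ↑k / 2 * Real.sqrt k := by
      simp
    rwa [h2] at h1
  have hk32 : (k:ℝ) ^ ((3:ℝ)/2) = (k:ℝ) * Real.sqrt k := by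
    rw [show (3:ℝ)/2 = 1 + 1/2 by norm_num, Real.rpow_add hkR, Real.rpow_one,
      ← Real.sqrt_eq_rpow]
  calc ‖(∫ u, φ u ∂μ) - ∑ i, (inner ℝ (G i) g : ℝ) • G i‖
      = ‖∫ u, (φ u - ψ u) ∂μ‖ := by rw [hsplit]
    _ ≤ L * lam * k / 2 * Real.sqrt k := hbound
    _ = L * lam * (k : ℝ) ^ ((3:ℝ)/2) / 2 := by rw [hk32]; ring

/-- For `L`-smooth `f`, `G` with orthonormal columns, `λ > 0`, and `u` uniform on the
sphere of radius `√k`,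
`‖E[((f(x+λGu) − f(x−λGu))/(2λ)) Gu] − GGᵀ∇f(x)‖ ≤ Lλk^{3/2}/2`. -/
theorem subspace_estimator_bias (d k : ℕ) (L lam : ℝ) (hlam : 0 < lam)
    (f : EuclideanSpace ℝ (Fin d) → ℝ) (hf : Differentiable ℝ f)
    (hL : ∀ x y, ‖gradient f x - gradient f y‖ ≤ L * ‖x - y‖)
    (G : Fin k → EuclideanSpace ℝ (Fin d)) (hG : Orthonormal ℝ G)
    (μ : Measure (EuclideanSpace ℝ (Fin k)))
    (hμ : IsUniformSphere μ (Real.sqrt k))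
    (x : EuclideanSpace ℝ (Fin d)) :
    ‖(∫ u, ((f (x + lam • ∑ i, u i • G i) - f (x - lam • ∑ i, u i • G i)) / (2 * lam))
          • (∑ i, u i • G i) ∂μ)
        - ∑ i, (inner ℝ (G i) (gradient f x) : ℝ) • G i‖
      ≤ L * lam * (k : ℝ) ^ ((3 : ℝ) / 2) / 2 := by
  rcases Nat.eq_zero_or_pos k with hk0 | hk
  · subst hk0
    haveI := hμ.1
    simp [Real.zero_rpow (by norm_num : ((3:ℝ)/2) ≠ 0)]
  · exact main_aux d k L lam hlam f hf hL G hG μ hμ hk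
      (fun u => ∑ i, u i • G i) (fun u => rfl) x
end
end
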